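/- arXiv:1106.4751 — 5 statements merged into one kernel-verified Lean document; each statement's English description precedes it below -/
import Mathlib

section
/- Let 0 < η, let C ∈ ℂ, and let u : (0,∞) → ℂ be measurable with u(x) = C for a.e. x ∈ (0, η], and suppose u has rapid decrease at infinity: for every N ≥ 0 there is C_N with |u(x)| ≤ C_N x^{−N} for x ≥ η. Then there exists a function F analytic on ℂ∖{1} such that: (i) F(s) = ∫_0^∞ u(x) x^{−s} dx for every s with Re(s) < 1 (the integral converging absolutely there); (ii) F(s) = ∫_η^∞ (u(x) − C) x^{−s} dx for every s with Re(s) > 1 (the integral converging absolutely there); and (iii) F has at worst a simple pole at s = 1 with lim_{s→1} (s−1)·F(s) = −C. -/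
open MeasureTheory Set Complex Filter Real
noncomputable section

/-- Let `u` be measurable on `(0,∞)`, a.e. equal to the constant `C` on
`(0,η]`, with rapid decrease at infinity. Then the Mellin transform of `u` extends to an
analytic function `F` on `ℂ∖{1}` with: (i) `F(s) = ∫_0^∞ u(x)x^{-s} dx` (absolutely
convergent) for `Re s < 1`; (ii) `F(s) = ∫_η^∞ (u(x)−C)x^{-s} dx` (absolutely convergent)
for `Re s > 1`; (iii) at worst a simple pole at `s = 1` with `lim_{s→1}(s−1)F(s) = −C`. -/
theorem stmt8 (η : ℝ) (hη : 0 < η) (C : ℂ) (u : ℝ → ℂ) (hum : Measurable u)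
    (huc : ∀ᵐ x ∂volume.restrict (Ioc (0:ℝ) η), u x = C)
    (hdecay : ∀ N : ℕ, ∃ CN : ℝ, ∀ x : ℝ, η ≤ x → ‖u x‖ ≤ CN * x ^ (-(N:ℝ))) :
    ∃ F : ℂ → ℂ, AnalyticOnNhd ℂ F {(1:ℂ)}ᶜ ∧
      (∀ s : ℂ, s.re < 1 → IntegrableOn (fun x : ℝ => u x * (x:ℂ) ^ (-s)) (Ioi 0) volume ∧
        F s = ∫ x in Ioi (0:ℝ), u x * (x:ℂ) ^ (-s)) ∧
      (∀ s : ℂ, 1 < s.re →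
        IntegrableOn (fun x : ℝ => (u x - C) * (x:ℂ) ^ (-s)) (Ioi η) volume ∧
        F s = ∫ x in Ioi η, (u x - C) * (x:ℂ) ^ (-s)) ∧
      Tendsto (fun s : ℂ => (s - 1) * F s) (nhdsWithin 1 {(1:ℂ)}ᶜ) (nhds (-C)) := by
  have hηC : ((η:ℝ):ℂ) ≠ 0 := by exact_mod_cast hη.ne'
  set v : ℝ → ℂ := (Ioi η).indicator u with hv
  have hvm : Measurable v := hum.indicator measurableSet_Ioi
  -- global bound for v
  obtain ⟨C0, hC0⟩ := hdecay 0
  have hvbound : ∀ x : ℝ, ‖v x‖ ≤ max C0 0 := by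
    intro x
    rcases le_or_gt x η with h | h
    · rw [hv, indicator_of_notMem (by simpa using h)]; simp
    · rw [hv, indicator_of_mem (by simpa using h)]
      have := hC0 x h.le
      simp only [Nat.cast_zero, neg_zero, Real.rpow_zero, mul_one] at this
      exact this.trans (le_max_left _ _)
  have hv_loc : LocallyIntegrableOn v (Ioi (0:ℝ)) volume :=
    ((memLp_top_of_bound hvm.aestronglyMeasurable _
      (Eventually.of_forall hvbound)).locallyIntegrable le_top).locallyIntegrableOn _
  have hv_top : ∀ a : ℝ, v =O[atTop] fun x : ℝ => x ^ (-a) := by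
    intro a
    obtain ⟨CN, hCN⟩ := hdecay ⌈a⌉₊
    rw [Asymptotics.isBigO_iff]
    refine ⟨max CN 0, ?_⟩
    filter_upwards [eventually_ge_atTop (max η 1)] with x hx
    have hx1 : (1:ℝ) ≤ x := le_trans (le_max_right _ _) hx
    have hxη : η ≤ x := le_trans (le_max_left _ _) hx
    have hxpos : (0:ℝ) < x := lt_of_lt_of_le one_pos hx1
    have h1 : ‖v x‖ ≤ CN * x ^ (-(⌈a⌉₊:ℝ)) :=
      le_trans (norm_indicator_le_norm_self u x) (hCN x hxη)
    have hCN0 : 0 ≤ CN := by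
      have h2 := (norm_nonneg (u x)).trans (hCN x hxη)
      nlinarith [Real.rpow_pos_of_pos hxpos (-(⌈a⌉₊:ℝ))]
    have h3 : x ^ (-(⌈a⌉₊:ℝ)) ≤ x ^ (-a) :=
      Real.rpow_le_rpow_of_exponent_le hx1 (neg_le_neg (Nat.le_ceil a))
    calc ‖v x‖ ≤ CN * x ^ (-(⌈a⌉₊:ℝ)) := h1
      _ ≤ max CN 0 * x ^ (-a) := by
          have := mul_le_mul_of_nonneg_left h3 hCN0
          exact this.trans (mul_le_mul_of_nonneg_right (le_max_left _ _)
            (Real.rpow_nonneg hxpos.le _))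
      _ = max CN 0 * ‖x ^ (-a)‖ := by
          rw [Real.norm_of_nonneg (Real.rpow_nonneg hxpos.le _)]
  have hv_bot : ∀ b : ℝ, v =O[nhdsWithin (0:ℝ) (Ioi 0)] fun x : ℝ => x ^ (-b) := by
    intro b
    rw [Asymptotics.isBigO_iff]
    refine ⟨1, ?_⟩
    filter_upwards [Ioo_mem_nhdsGT hη] with x hx
    rw [hv, indicator_of_notMem (by simpa using hx.2.le)]
    simp only [norm_zero, one_mul]
    exact norm_nonneg _
  have hmc : ∀ s : ℂ, MellinConvergent v s := fun s =>
    mellinConvergent_of_isBigO_rpow hv_loc (hv_top (s.re + 1)) (by linarith)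
      (hv_bot (s.re - 1)) (by linarith)
  have hmd : Differentiable ℂ (mellin v) := fun s =>
    mellin_differentiableAt_of_isBigO_rpow hv_loc (hv_top (s.re + 1)) (by linarith)
      (hv_bot (s.re - 1)) (by linarith)
  set H : ℂ → ℂ := fun s => mellin v (1 - s) with hH
  have hHd : Differentiable ℂ H :=
    hmd.comp ((differentiable_const (1:ℂ)).sub differentiable_id)
  -- the key identification of H with the integral over (η, ∞)
  have key : ∀ s : ℂ, IntegrableOn (fun x : ℝ => u x * (x:ℂ) ^ (-s)) (Ioi η) volume ∧
      H s = ∫ x in Ioi η, u x * (x:ℂ) ^ (-s) := by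
    intro s
    have h1 : IntegrableOn (fun t : ℝ => (t : ℂ) ^ ((1 - s) - 1) • v t) (Ioi (0:ℝ)) volume :=
      hmc (1 - s)
    have hexp : (1 - s) - 1 = -s := by ring
    rw [hexp] at h1
    have hsub : Ioi η ⊆ Ioi (0:ℝ) := Ioi_subset_Ioi hη.le
    constructor
    · refine (h1.mono_set hsub).congr_fun (fun x hx => ?_) measurableSet_Ioi
      beta_reduce
      rw [hv, indicator_of_mem hx, smul_eq_mul, mul_comm]
    · have : H s = ∫ x in Ioi (0:ℝ), (x:ℂ) ^ (-s) • v x := by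
        rw [hH]; simp only [mellin, hexp]
      rw [this, setIntegral_congr_fun measurableSet_Ioi
        (g := (Ioi η).indicator fun x : ℝ => u x * (x:ℂ) ^ (-s)) (fun x hx => ?_),
        setIntegral_indicator measurableSet_Ioi, Ioi_inter_Ioi, max_eq_right hη.le]
      by_cases hxη : x ∈ Ioi η
      · rw [hv, indicator_of_mem hxη, indicator_of_mem hxη, smul_eq_mul, mul_comm]
      · rw [hv, indicator_of_notMem hxη, indicator_of_notMem hxη, smul_zero]
  refine ⟨fun s => H s + C * ((η:ℝ):ℂ) ^ (-s + 1) / (-s + 1), ?_, ?_, ?_, ?_⟩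
  · -- analyticity on ℂ ∖ {1}
    refine DifferentiableOn.analyticOnNhd (fun s hs => ?_) isOpen_compl_singleton
    have hs1 : (-s + 1 : ℂ) ≠ 0 := by
      intro h
      apply hs
      have : s = 1 := by linear_combination -h
      simp [this]
    exact ((hHd s).add ((((differentiableAt_const C).mul
      ((differentiableAt_id.neg.add (differentiableAt_const 1)).const_cpow
        (Or.inl hηC)))).div
      (differentiableAt_id.neg.add (differentiableAt_const 1)) hs1)).differentiableWithinAt
  · -- (i) Re s < 1
    intro s hs
    have hre : (-1:ℝ) < (-s).re := by simp only [Complex.neg_re]; linarith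
    have hI1 : IntegrableOn (fun x : ℝ => (x:ℂ) ^ (-s)) (Ioc (0:ℝ) η) volume := by
      have h := intervalIntegral.intervalIntegrable_cpow' (a := 0) (b := η) hre
      rwa [intervalIntegrable_iff_integrableOn_Ioc_of_le hη.le] at h
    have hae : (fun x : ℝ => C * (x:ℂ) ^ (-s))
        =ᵐ[volume.restrict (Ioc (0:ℝ) η)] fun x => u x * (x:ℂ) ^ (-s) :=
      huc.mono fun x hx => by simp [hx]
    have hIC : IntegrableOn (fun x : ℝ => u x * (x:ℂ) ^ (-s)) (Ioc (0:ℝ) η) volume :=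
      (hI1.const_mul C).congr hae
    have hIunion : IntegrableOn (fun x : ℝ => u x * (x:ℂ) ^ (-s)) (Ioi (0:ℝ)) volume := by
      rw [← Ioc_union_Ioi_eq_Ioi hη.le]
      exact hIC.union (key s).1
    refine ⟨hIunion, ?_⟩
    show H s + C * ((η:ℝ):ℂ) ^ (-s + 1) / (-s + 1) = _
    rw [← Ioc_union_Ioi_eq_Ioi hη.le,
      setIntegral_union (Ioc_disjoint_Ioi le_rfl) measurableSet_Ioi hIC (key s).1,
      ← integral_congr_ae hae, integral_const_mul,
      ← intervalIntegral.integral_of_le hη.le, integral_cpow (Or.inl hre)]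
    have h0 : ((0:ℝ):ℂ) ^ (-s + 1) = 0 := by
      rw [Complex.ofReal_zero, Complex.zero_cpow]
      intro h
      have := congrArg Complex.re h
      simp only [Complex.add_re, Complex.neg_re, Complex.one_re, Complex.zero_re] at this
      linarith
    rw [h0, (key s).2]
    ring
  · -- (ii) Re s > 1
    intro s hs
    have hre : (-s).re < -1 := by simp only [Complex.neg_re]; linarith
    have hIc : IntegrableOn (fun x : ℝ => (x:ℂ) ^ (-s)) (Ioi η) volume :=
      integrableOn_Ioi_cpow_of_lt hre hη
    have hI : IntegrableOn (fun x : ℝ => (u x - C) * (x:ℂ) ^ (-s)) (Ioi η) volume :=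
      ((key s).1.sub (hIc.const_mul C)).congr (Eventually.of_forall fun x => by simp only [Pi.sub_apply]; ring)
    refine ⟨hI, ?_⟩
    show H s + C * ((η:ℝ):ℂ) ^ (-s + 1) / (-s + 1) = _
    have heq : (fun x : ℝ => (u x - C) * (x:ℂ) ^ (-s))
        = fun x : ℝ => u x * (x:ℂ) ^ (-s) - C * (x:ℂ) ^ (-s) := funext fun x => by ring
    rw [heq, integral_sub (key s).1 (hIc.const_mul C), integral_const_mul,
      integral_Ioi_cpow_of_lt hre hη, (key s).2]
    ring
  · -- (iii) the residue at s = 1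
    have hcont : ContinuousAt (fun s : ℂ => (s - 1) * H s - C * ((η:ℝ):ℂ) ^ (-s + 1)) 1 := by
      apply ContinuousAt.sub
      · exact ((continuousAt_id.sub continuousAt_const).mul (hHd.continuous.continuousAt))
      · exact continuousAt_const.mul
          (((continuous_id.neg.add continuous_const).const_cpow (Or.inl hηC)).continuousAt)
    have hval : ((1:ℂ) - 1) * H 1 - C * ((η:ℝ):ℂ) ^ (-(1:ℂ) + 1) = -C := by
      simp
    have h2 : Tendsto (fun s : ℂ => (s - 1) * H s - C * ((η:ℝ):ℂ) ^ (-s + 1))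
        (nhdsWithin 1 {(1:ℂ)}ᶜ) (nhds (-C)) := by
      rw [← hval]
      exact hcont.continuousWithinAt.tendsto
    refine h2.congr' ?_
    filter_upwards [self_mem_nhdsWithin] with s hs
    have hs1 : (-s + 1 : ℂ) ≠ 0 := by
      intro h
      apply hs
      have : s = 1 := by linear_combination -h
      simp [this]
    field_simp
    ring
end
end

section
/- Let v ∈ L²((0,∞), dx) with v = 0 a.e. on (0,1), and set G(s) = ∫_1^∞ v(x) x^{−s} dx, which converges absolutely for Re(s) > 1. Then for every Z ∈ ℂ with Re(Z) = 1/2: ∫_ℝ G(3/2 + it) / (Z − (3/2 + it)) dt = 0. -/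
open MeasureTheory Set Complex Filter Real Topology
noncomputable section

theorem cexp_mul_re (a : ℂ) (s : ℝ) : (a * s).re = a.re * s := by simp [Complex.mul_re]

theorem cont_cexp_mul (b : ℂ) : Continuous fun s : ℝ => Complex.exp (b * s) :=
  Complex.continuous_exp.comp (continuous_const.mul Complex.continuous_ofReal)

def hfun (a : ℂ) : ℝ → ℂ := Set.indicator (Ioi 0) fun s => -Complex.exp (a * s)

theorem hfun_of_nonpos (a : ℂ) {s : ℝ} (hs : s ≤ 0) : hfun a s = 0 := by
  simp [hfun, Set.indicator_of_notMem, not_lt.mpr hs]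

theorem hfun_norm_le (a : ℂ) (ha : a.re < 0) (s : ℝ) : ‖hfun a s‖ ≤ 1 := by
  rcases le_or_gt s 0 with h | h
  · simp [hfun_of_nonpos a h]
  · simp only [hfun, Set.indicator_of_mem (mem_Ioi.mpr h), norm_neg]
    rw [Complex.norm_exp, cexp_mul_re]
    exact Real.exp_le_one_iff.mpr (by nlinarith)

theorem hfun_integrableOn (a : ℂ) (ha : a.re < 0) :
    IntegrableOn (fun s : ℝ => -Complex.exp (a * s)) (Ioi 0) := by
  refine (exp_neg_integrableOn_Ioi 0 (b := -a.re) (by linarith)).mono' ?_ ?_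
  · exact (cont_cexp_mul a).neg.aestronglyMeasurable
  · filter_upwards with s
    rw [norm_neg, Complex.norm_exp, cexp_mul_re]
    exact le_of_eq (by ring_nf)

theorem hfun_integrable (a : ℂ) (ha : a.re < 0) : Integrable (hfun a) :=
  (hfun_integrableOn a ha).integrable_indicator measurableSet_Ioi

theorem tendsto_cexp_mul_atTop (b : ℂ) (hb : b.re < 0) (c : ℂ) :
    Tendsto (fun s : ℝ => Complex.exp (b * s) / c) atTop (𝓝 0) := by
  apply squeeze_zero_norm (a := fun s : ℝ => Real.exp (b.re * s) / ‖c‖)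
  · intro s
    rw [norm_div, Complex.norm_exp, cexp_mul_re]
  · rw [show (0:ℝ) = 0 / ‖c‖ by simp]
    apply Tendsto.div_const
    rw [Real.tendsto_exp_comp_nhds_zero]
    exact tendsto_id.const_mul_atTop_of_neg hb

theorem integral_cexp_Ioi (b : ℂ) (hb : b.re < 0) :
    ∫ s in Ioi (0:ℝ), Complex.exp (b * s) = -b⁻¹ := by
  have hb0 : b ≠ 0 := fun h => by simp [h] at hb
  have key := MeasureTheory.integral_Ioi_of_hasDerivAt_of_tendsto'
    (f := fun s : ℝ => Complex.exp (b * s) / b) (f' := fun s : ℝ => Complex.exp (b * s))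
    (a := 0) (m := 0) ?_ ?_ ?_
  · rw [key]; simp [Complex.exp_zero]
  · intro x _
    have H := (((Complex.ofRealCLM.hasDerivAt (x := x)).const_mul b).cexp).div_const b
    simp only [Complex.ofRealCLM_apply, Complex.ofReal_one, mul_one] at H
    rwa [mul_div_cancel_right₀ _ hb0] at H
  · exact ((hfun_integrableOn b hb).neg.congr (by filter_upwards with s; simp))
  · exact tendsto_cexp_mul_atTop b hb b

theorem fourier_hfun (a : ℂ) (ha : a.re < 0) (ξ : ℝ) :
    FourierTransform.fourier (hfun a) ξ = (a - 2*π*ξ*Complex.I)⁻¹ := by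
  have hb : (a - 2*π*ξ*Complex.I).re < 0 := by simpa using ha
  rw [Real.fourier_real_eq_integral_exp_smul]
  have key : ∀ v : ℝ, Complex.exp (↑(-2*π*v*ξ)*Complex.I) • hfun a v
      = Set.indicator (Ioi 0) (fun v : ℝ => -Complex.exp ((a - 2*π*ξ*Complex.I) * v)) v := by
    intro v
    rcases le_or_gt v 0 with h | h
    · simp [hfun_of_nonpos a h, Set.indicator_of_notMem, not_lt.mpr h]
    · simp only [hfun, Set.indicator_of_mem (mem_Ioi.mpr h), smul_eq_mul]
      rw [mul_neg, ← Complex.exp_add]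
      congr 2
      push_cast
      ring
  rw [integral_congr_ae (Eventually.of_forall key), integral_indicator measurableSet_Ioi]
  have : ∫ v in Ioi (0:ℝ), -Complex.exp ((a - 2*π*ξ*Complex.I) * v)
      = -∫ v in Ioi (0:ℝ), Complex.exp ((a - 2*π*ξ*Complex.I) * v) := integral_neg _
  rw [this, integral_cexp_Ioi _ hb, neg_neg]

open scoped FourierTransform Convolution

theorem conv_core (f g : ℝ → ℂ) (hf : Integrable f) (hg : Integrable g)
    (hf0 : ∀ u : ℝ, u ≤ 0 → f u = 0) (hg0 : ∀ u : ℝ, u ≤ 0 → g u = 0)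
    (hgb : ∀ u : ℝ, ‖g u‖ ≤ 1)
    (hFI : Integrable (fun ξ : ℝ => 𝓕 f ξ * 𝓕 g ξ)) :
    ∫ ξ : ℝ, 𝓕 f ξ * 𝓕 g ξ = 0 := by
  set L : ℂ →L[ℝ] ℂ →L[ℝ] ℂ := ContinuousLinearMap.mul ℝ ℂ with hL
  set c : ℝ → ℂ := f ⋆[L] g with hcdef
  -- c is integrable
  have hc : Integrable c := hf.integrable_convolution L hg
  -- c vanishes on (-∞, 0]
  have hc0 : ∀ s : ℝ, s ≤ 0 → c s = 0 := by
    intro s hs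
    rw [hcdef, convolution_def]
    rw [← integral_zero ℝ ℂ]
    congr 1; ext t
    rcases le_or_gt t 0 with h | h
    · simp [hf0 t h]
    · have : s - t ≤ 0 := by linarith
      simp [hg0 _ this]
  -- pointwise bound for the convolution integrand
  have hbound : ∀ s t : ℝ, ‖f t * g (s - t)‖ ≤ Set.indicator (Ioc 0 s) (fun t => ‖f t‖) t := by
    intro s t
    rcases le_or_gt t 0 with h | h
    · simp only [hf0 t h, zero_mul, norm_zero]
      exact Set.indicator_nonneg (fun x _ => norm_nonneg _) t
    · rcases le_or_gt t s with h2 | h2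
      · rw [Set.indicator_of_mem (by exact ⟨h, h2⟩)]
        calc ‖f t * g (s - t)‖ = ‖f t‖ * ‖g (s - t)‖ := norm_mul _ _
        _ ≤ ‖f t‖ * 1 := by
            exact mul_le_mul_of_nonneg_left (hgb _) (norm_nonneg _)
        _ = ‖f t‖ := mul_one _
      · have : s - t ≤ 0 := by linarith
        simp only [hg0 _ this, mul_zero, norm_zero]
        exact Set.indicator_nonneg (fun x _ => norm_nonneg _) t
  -- norm bound via the primitive
  have hnorm : ∀ s : ℝ, ‖c s‖ ≤ |∫ u in (0:ℝ)..s, ‖f u‖| := by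
    intro s
    have h1 : ‖c s‖ ≤ ∫ t : ℝ, Set.indicator (Ioc 0 s) (fun t => ‖f t‖) t := by
      rw [hcdef, convolution_def]
      refine norm_integral_le_of_norm_le (hf.norm.indicator measurableSet_Ioc) ?_
      filter_upwards with t
      simpa [hL, ContinuousLinearMap.mul_apply'] using hbound s t
    rw [integral_indicator measurableSet_Ioc] at h1
    rcases le_or_gt 0 s with h | h
    · rw [intervalIntegral.integral_of_le h]
      exact h1.trans (le_abs_self _)
    · have : Ioc (0:ℝ) s = ∅ := Ioc_eq_empty (by linarith)
      rw [this] at h1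
      have h2 : ‖c s‖ ≤ 0 := by simpa using h1
      exact h2.trans (abs_nonneg _)
  -- continuity of c at 0
  have hcont : ContinuousAt c 0 := by
    have hΦ : Continuous fun s : ℝ => ∫ u in (0:ℝ)..s, ‖f u‖ :=
      intervalIntegral.continuous_primitive (fun a b => hf.norm.intervalIntegrable) 0
    have h0 : ContinuousAt (fun s : ℝ => |∫ u in (0:ℝ)..s, ‖f u‖|) 0 :=
      (continuous_abs.comp hΦ).continuousAt
    unfold ContinuousAt
    rw [hc0 0 le_rfl]
    refine squeeze_zero_norm hnorm ?_
    have h00 : |∫ u in (0:ℝ)..(0:ℝ), ‖f u‖| = 0 := by simp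
    simpa [h00] using h0.tendsto
  -- Fourier transform of the convolution
  have hFc : ∀ ξ : ℝ, 𝓕 c ξ = 𝓕 f ξ * 𝓕 g ξ := by
    intro ξ
    set e : ℝ → ℂ := fun x => Complex.exp (↑(-2 * π * x * ξ) * Complex.I) with he
    have he_mul : ∀ x y : ℝ, e (x + y) = e x * e y := by
      intro x y
      simp only [he, ← Complex.exp_add]
      congr 1
      push_cast
      ring
    have he_norm : ∀ x : ℝ, ‖e x‖ = 1 := by
      intro x
      simp only [he, Complex.norm_exp]
      simp [Complex.mul_re]
    have he_cont : Continuous e := by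
      apply Complex.continuous_exp.comp
      exact (Complex.continuous_ofReal.comp (by continuity)).mul continuous_const
    have hFint : Integrable (fun p : ℝ × ℝ => e p.1 * (f p.2 * g (p.1 - p.2)))
        (volume.prod volume) := by
      have base := hf.convolution_integrand L hg
      have base' : Integrable (fun p : ℝ × ℝ => f p.2 * g (p.1 - p.2)) (volume.prod volume) := by
        simpa [hL, ContinuousLinearMap.mul_apply'] using base
      exact base'.bdd_mul ((he_cont.comp continuous_fst).aestronglyMeasurable)
        (c := 1) (Eventually.of_forall fun p => le_of_eq (he_norm p.1))
    calc 𝓕 c ξ = ∫ x : ℝ, e x * c x := by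
          rw [Real.fourier_real_eq_integral_exp_smul]
          simp [he, smul_eq_mul]
      _ = ∫ x : ℝ, ∫ t : ℝ, e x * (f t * g (x - t)) := by
          congr 1; ext x
          rw [hcdef, convolution_def, ← integral_const_mul]
          simp [hL, ContinuousLinearMap.mul_apply']
      _ = ∫ t : ℝ, ∫ x : ℝ, e x * (f t * g (x - t)) := integral_integral_swap hFint
      _ = ∫ t : ℝ, (e t * f t) * 𝓕 g ξ := by
          congr 1; ext t
          have sub : ∫ x : ℝ, e x * (f t * g (x - t))
              = ∫ y : ℝ, e (y + t) * (f t * g y) := by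
            rw [← integral_add_right_eq_self (fun x => e x * (f t * g (x - t))) t]
            simp
          rw [sub]
          have : ∀ y : ℝ, e (y + t) * (f t * g y) = (e t * f t) * (e y * g y) := by
            intro y; rw [he_mul]; ring
          simp_rw [this]
          rw [integral_const_mul]
          congr 1
          rw [Real.fourier_real_eq_integral_exp_smul]
          simp [he, smul_eq_mul]
      _ = (∫ t : ℝ, e t * f t) * 𝓕 g ξ := by rw [← integral_mul_const]
      _ = 𝓕 f ξ * 𝓕 g ξ := by
          congr 1
          rw [Real.fourier_real_eq_integral_exp_smul]
          simp [he, smul_eq_mul]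
  -- Fourier inversion at 0
  have h'f : Integrable (𝓕 c) := hFI.congr (Eventually.of_forall fun ξ => (hFc ξ).symm)
  have hinv := hc.fourierInv_fourier_eq h'f hcont
  rw [hc0 0 le_rfl] at hinv
  have : 𝓕⁻ (𝓕 c) 0 = ∫ ξ : ℝ, 𝓕 c ξ := by
    rw [Real.fourierInv_eq]
    simp
  rw [this] at hinv
  rw [← hinv]
  exact integral_congr_ae (Eventually.of_forall fun ξ => (hFc ξ).symm) |>.symm ▸ rfl

theorem exp_image_Ioi : Real.exp '' (Ioi 0) = Ioi 1 := by
  ext x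
  constructor
  · rintro ⟨u, hu, rfl⟩
    rw [mem_Ioi, ← Real.exp_zero]
    exact Real.exp_lt_exp.mpr hu
  · intro hx
    exact ⟨Real.log x, Real.log_pos hx, Real.exp_log (lt_trans one_pos hx)⟩

theorem cov (g : ℝ → ℂ) : ∫ x in Ioi (1:ℝ), g x = ∫ u in Ioi (0:ℝ), Real.exp u • g (Real.exp u) := by
  rw [← exp_image_Ioi, integral_image_eq_integral_abs_deriv_smul measurableSet_Ioi
    (fun x _ => (Real.hasDerivAt_exp x).hasDerivWithinAt) Real.exp_injective.injOn]
  congr 1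
  ext u
  rw [abs_of_pos (Real.exp_pos u)]

theorem cov_int (g : ℝ → ℂ) : IntegrableOn g (Ioi 1) ↔
    IntegrableOn (fun u => Real.exp u • g (Real.exp u)) (Ioi 0) := by
  rw [← exp_image_Ioi, integrableOn_image_iff_integrableOn_abs_deriv_smul measurableSet_Ioi
    (fun x _ => (Real.hasDerivAt_exp x).hasDerivWithinAt) Real.exp_injective.injOn]
  constructor <;> intro h <;> refine h.congr_fun ?_ measurableSet_Ioi <;> intro u _ <;>
    simp [abs_of_pos (Real.exp_pos u)]

theorem cpow_exp (u : ℝ) (c : ℂ) : ((Real.exp u : ℝ) : ℂ) ^ c = Complex.exp (c * u) := by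
  rw [Complex.cpow_def_of_ne_zero (by exact_mod_cast (Real.exp_pos u).ne'),
    ← Complex.ofReal_log (Real.exp_pos u).le, Real.log_exp, mul_comm]

def wfun (v : ℝ → ℂ) : ℝ → ℂ :=
  Set.indicator (Ioi 0) fun u => v (Real.exp u) * Complex.exp (-(u:ℂ)/2)

theorem part1 (v : ℝ → ℂ) (hv : MemLp v 2 (volume.restrict (Ioi 0)))
    (s : ℂ) (hs : 1 < s.re) :
    IntegrableOn (fun x : ℝ => v x * (x:ℂ) ^ (-s)) (Ioi 1) volume := by
  have hv1 : MemLp v 2 (volume.restrict (Ioi 1)) := by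
    have h := hv.restrict (Ioi 1)
    rwa [Measure.restrict_restrict measurableSet_Ioi,
      inter_eq_self_of_subset_left (Ioi_subset_Ioi zero_le_one)] at h
  have hcont : ContinuousOn (fun x : ℝ => (x:ℂ) ^ (-s)) (Ioi 1) := by
    intro x hx
    have hx1 : (1:ℝ) < x := hx
    refine ContinuousAt.continuousWithinAt ?_
    refine (continuousAt_cpow_const ?_).comp continuous_ofReal.continuousAt
    exact Complex.ofReal_mem_slitPlane.mpr (by linarith)
  have hmeas : AEStronglyMeasurable (fun x : ℝ => (x:ℂ) ^ (-s)) (volume.restrict (Ioi 1)) :=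
    hcont.aestronglyMeasurable measurableSet_Ioi
  have hp : MemLp (fun x : ℝ => (x:ℂ) ^ (-s)) 2 (volume.restrict (Ioi 1)) := by
    rw [memLp_two_iff_integrable_sq_norm hmeas]
    have h2 : IntegrableOn (fun x : ℝ => x ^ (-2 * s.re)) (Ioi 1) volume :=
      integrableOn_Ioi_rpow_of_lt (by linarith) one_pos
    refine h2.congr_fun ?_ measurableSet_Ioi
    intro x hx
    have hx0 : (0:ℝ) < x := lt_trans one_pos hx
    show x ^ (-2 * s.re) = ‖(x:ℂ) ^ (-s)‖ ^ 2
    rw [Complex.norm_cpow_eq_rpow_re_of_pos hx0,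
      ← Real.rpow_natCast (x ^ (-s).re) 2, ← Real.rpow_mul hx0.le]
    congr 1
    simp; ring
  have h3 := hp.smul (E := ℂ) (𝕜 := ℂ) hv1 (p := 2) (q := 2) (r := 1)
    (hpqr := ⟨by rw [inv_one, ENNReal.inv_two_add_inv_two]⟩)
  rw [memLp_one_iff_integrable] at h3
  exact h3.congr (Filter.Eventually.of_forall (fun x => by
    simp [Pi.smul_apply, smul_eq_mul, mul_comm]))

theorem wfun_integrable (v : ℝ → ℂ) (hv : MemLp v 2 (volume.restrict (Ioi 0))) :
    Integrable (wfun v) := by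
  have h32 : IntegrableOn (fun x : ℝ => v x * (x:ℂ) ^ (-(3/2:ℂ))) (Ioi 1) volume :=
    part1 v hv (3/2) (by norm_num)
  rw [cov_int] at h32
  have key : IntegrableOn (fun u : ℝ => v (Real.exp u) * Complex.exp (-(u:ℂ)/2)) (Ioi 0) := by
    refine h32.congr_fun ?_ measurableSet_Ioi
    intro u _
    show Real.exp u • (v (Real.exp u) * ((Real.exp u : ℝ):ℂ) ^ (-(3/2:ℂ)))
      = v (Real.exp u) * Complex.exp (-(u:ℂ)/2)
    calc Real.exp u • (v (Real.exp u) * ((Real.exp u : ℝ):ℂ) ^ (-(3/2:ℂ)))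
        = v (Real.exp u) * (Complex.exp ↑u * Complex.exp (-(3/2:ℂ) * ↑u)) := by
          rw [cpow_exp, Complex.real_smul, Complex.ofReal_exp]; ring
      _ = v (Real.exp u) * Complex.exp (↑u + -(3/2:ℂ) * ↑u) := by rw [Complex.exp_add]
      _ = v (Real.exp u) * Complex.exp (-(u:ℂ)/2) := by congr 1; ring_nf
  exact key.integrable_indicator measurableSet_Ioi

theorem fourier_wfun (v : ℝ → ℂ) (t : ℝ) :
    ∫ x in Ioi (1:ℝ), v x * (x:ℂ) ^ (-(3/2 + Complex.I * t))
      = 𝓕 (wfun v) (t / (2 * π)) := by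
  rw [cov, Real.fourier_real_eq_integral_exp_smul, ← integral_indicator measurableSet_Ioi]
  refine integral_congr_ae (Eventually.of_forall fun u => ?_)
  rcases le_or_gt u 0 with h | h
  · simp [wfun, Set.indicator_of_notMem, not_lt.mpr h]
  · rw [Set.indicator_of_mem (mem_Ioi.mpr h)]
    show Real.exp u • (v (Real.exp u) * ((Real.exp u : ℝ):ℂ) ^ (-(3/2 + Complex.I * t))) = _
    simp only [wfun, Set.indicator_of_mem (mem_Ioi.mpr h), smul_eq_mul]
    have harg : -2 * π * u * (t / (2 * π)) = -(u * t) := by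
      field_simp
    rw [harg]
    calc Real.exp u • (v (Real.exp u) * ((Real.exp u : ℝ):ℂ) ^ (-(3/2 + Complex.I * t)))
        = v (Real.exp u) * (Complex.exp ↑u * Complex.exp (-(3/2 + Complex.I * t) * ↑u)) := by
          rw [cpow_exp, Complex.real_smul, Complex.ofReal_exp]; ring
      _ = v (Real.exp u) * Complex.exp (↑u + -(3/2 + Complex.I * t) * ↑u) := by
          rw [Complex.exp_add]
      _ = Complex.exp (↑(-(u * t)) * Complex.I) * (v (Real.exp u) * Complex.exp (-(u:ℂ)/2)) := by
          rw [show Complex.exp (↑(-(u*t)) * Complex.I) * (v (Real.exp u) * Complex.exp (-(u:ℂ)/2))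
              = v (Real.exp u) * (Complex.exp (↑(-(u*t)) * Complex.I) * Complex.exp (-(u:ℂ)/2)) from by
                ring, ← Complex.exp_add]
          congr 1
          push_cast
          ring

/-- Let `v ∈ L²((0,∞))` vanish a.e. on `(0,1)` and set
`G(s) = ∫_1^∞ v(x) x^{-s} dx`, absolutely convergent for `Re s > 1`. Then for every `Z`
on the critical line, `∫_ℝ G(3/2+it)/(Z − (3/2+it)) dt = 0`. -/
theorem stmt10 (v : ℝ → ℂ)
    (hv : MemLp v 2 (volume.restrict (Ioi 0)))
    (hv0 : ∀ᵐ x ∂volume.restrict (Ioo (0:ℝ) 1), v x = 0) :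
    (∀ s : ℂ, 1 < s.re → IntegrableOn (fun x : ℝ => v x * (x:ℂ) ^ (-s)) (Ioi 1) volume) ∧
    ∀ Z : ℂ, Z.re = 1/2 →
      ∫ t : ℝ, (∫ x in Ioi (1:ℝ), v x * (x:ℂ) ^ (-(3/2 + I * t))) / (Z - (3/2 + I * t)) = 0 := by
  constructor
  · exact fun s hs => part1 v hv s hs
  intro Z hZ
  set a : ℂ := Z - 3/2 with hadef
  have h32re : ((3/2 : ℂ)).re = 3/2 := by
    have : (3/2 : ℂ) = ((3/2 : ℝ) : ℂ) := by norm_num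
    rw [this, Complex.ofReal_re]
  have ha : a.re < 0 := by
    rw [hadef, Complex.sub_re, hZ, h32re]
    norm_num
  have h2π : (2 * π : ℝ) ≠ 0 := (mul_pos two_pos Real.pi_pos).ne'
  by_cases hInt : Integrable (fun t : ℝ =>
    (∫ x in Ioi (1:ℝ), v x * (x:ℂ) ^ (-(3/2 + I * t))) / (Z - (3/2 + I * t)))
  · have heq : ∀ t : ℝ,
        (∫ x in Ioi (1:ℝ), v x * (x:ℂ) ^ (-(3/2 + I * t))) / (Z - (3/2 + I * t))
          = 𝓕 (wfun v) (t / (2 * π)) * 𝓕 (hfun a) (t / (2 * π)) := by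
      intro t
      rw [fourier_wfun v t, fourier_hfun a ha (t / (2 * π)), div_eq_mul_inv]
      congr 2
      rw [hadef]
      have hπ : (π : ℂ) ≠ 0 := by exact_mod_cast Real.pi_ne_zero
      push_cast
      field_simp
      ring
    have hFI : Integrable (fun ξ : ℝ => 𝓕 (wfun v) ξ * 𝓕 (hfun a) ξ) := by
      have h1 : Integrable (fun t : ℝ => 𝓕 (wfun v) (t / (2 * π)) * 𝓕 (hfun a) (t / (2 * π))) :=
        hInt.congr (Eventually.of_forall heq)
      exact (integrable_comp_div_iff (fun ξ : ℝ => 𝓕 (wfun v) ξ * 𝓕 (hfun a) ξ) h2π).mp h1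
    calc ∫ t : ℝ, (∫ x in Ioi (1:ℝ), v x * (x:ℂ) ^ (-(3/2 + I * t))) / (Z - (3/2 + I * t))
        = ∫ t : ℝ, 𝓕 (wfun v) (t / (2 * π)) * 𝓕 (hfun a) (t / (2 * π)) :=
          integral_congr_ae (Eventually.of_forall heq)
      _ = |2 * π| • ∫ ξ : ℝ, 𝓕 (wfun v) ξ * 𝓕 (hfun a) ξ :=
          MeasureTheory.Measure.integral_comp_div (fun ξ : ℝ => 𝓕 (wfun v) ξ * 𝓕 (hfun a) ξ) (2 * π)
      _ = 0 := by
          rw [conv_core (wfun v) (hfun a) (wfun_integrable v hv) (hfun_integrable a ha)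
            (fun u hu => Set.indicator_of_notMem (by simpa using not_lt.mpr hu) _)
            (fun u hu => hfun_of_nonpos a hu) (hfun_norm_le a ha) hFI, smul_zero]
  · exact integral_undef hInt

end
end

section
/- Let W : ℝ → ℂ be measurable with t ↦ (3/2 + it)·W(t) in L²(ℝ). Then for every Z ∈ ℂ with Re(Z) = 1/2 and Z ≠ 0, the integral ∫_ℝ W(t)/(Z − (3/2 + it)) dt converges absolutely and |(1/2π) ∫_ℝ W(t)/(Z − (3/2 + it)) dt| ≤ (1/|Z|)·(√(1/3) + √(1/2))·√((1/2π) ∫_ℝ |3/2 + it|² |W(t)|² dt). -/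
open MeasureTheory Set Complex Filter Real
noncomputable section

lemma aux_norm_sq (z : ℂ) : ‖z‖^2 = z.re^2 + z.im^2 := by
  rw [Complex.sq_norm, Complex.normSq_apply]; ring

lemma aux_int94 : Integrable (fun t : ℝ => (9/4 + t^2)⁻¹) := by
  have h := (integrable_inv_one_add_sq.comp_mul_left' (R := 2/3) (by norm_num)).const_mul (4/9)
  refine h.congr (Eventually.of_forall fun t => ?_)
  field_simp; ring

lemma aux_val94 : (∫ t : ℝ, (9/4 + t^2)⁻¹) = 2/3 * π := by
  have h1 : ∀ t : ℝ, (9/4 + t^2)⁻¹ = (4/9) * (1 + (2/3*t)^2)⁻¹ := by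
    intro t; rw [eq_comm]; field_simp; ring
  simp_rw [h1]
  rw [integral_const_mul, Measure.integral_comp_mul_left (fun x => (1 + x^2)⁻¹) (2/3),
    integral_univ_inv_one_add_sq]
  rw [show ((2/3 : ℝ))⁻¹ = 3/2 by norm_num, abs_of_pos (by norm_num : (0:ℝ) < 3/2)]
  rw [smul_eq_mul]; ring

lemma aux_intc (c : ℝ) : Integrable (fun t : ℝ => (1 + (c - t)^2)⁻¹) := by
  have h := integrable_inv_one_add_sq.comp_sub_right c
  refine h.congr (Eventually.of_forall fun t => ?_)
  ring_nf

lemma aux_valc (c : ℝ) : (∫ t : ℝ, (1 + (c - t)^2)⁻¹) = π := by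
  have h1 : ∀ t : ℝ, (1 + (c-t)^2)⁻¹ = (fun x : ℝ => (1+x^2)⁻¹) (t - c) := by
    intro t; simp only []; ring_nf
  simp_rw [h1]
  rw [integral_sub_right_eq_self (fun x : ℝ => (1 + x^2)⁻¹) c, integral_univ_inv_one_add_sq]

lemma aux_two : ENNReal.ofReal (2:ℝ) = 2 := by norm_num

lemma aux_conj : Real.HolderConjugate 2 2 := Real.HolderConjugate.two_two

lemma aux_rpow_two (x : ℝ) : x ^ (2:ℝ) = x^2 := by
  rw [show (2:ℝ) = ((2:ℕ):ℝ) by norm_num, Real.rpow_natCast]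

/-- If `W : ℝ → ℂ` is measurable with `t ↦ (3/2+it)·W(t)` in `L²(ℝ)`,
then for every `Z` on the critical line with `Z ≠ 0` the integral
`∫_ℝ W(t)/(Z − (3/2+it)) dt` converges absolutely and
`|(1/2π)∫_ℝ W(t)/(Z−(3/2+it)) dt| ≤ (1/|Z|)(√(1/3)+√(1/2))·√((1/2π)∫|3/2+it|²|W(t)|² dt)`. -/
theorem stmt11 (W : ℝ → ℂ) (hWm : Measurable W)
    (hW : MemLp (fun t : ℝ => (3/2 + I * t) * W t) 2 volume) :
    ∀ Z : ℂ, Z.re = 1/2 → Z ≠ 0 →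
      Integrable (fun t : ℝ => W t / (Z - (3/2 + I * t))) volume ∧
      ‖(1/(2*π) : ℝ) * ∫ t : ℝ, W t / (Z - (3/2 + I * t))‖ ≤
        (1 / ‖Z‖) * (Real.sqrt (1/3) + Real.sqrt (1/2)) *
          Real.sqrt ((1/(2*π)) * ∫ t : ℝ, ‖(3/2 + I * t : ℂ)‖ ^ 2 * ‖W t‖ ^ 2) := by
  intro Z hZre hZ0
  set a : ℝ → ℂ := fun t => 3/2 + I * t with ha_def
  have ha_re : ∀ t : ℝ, (a t).re = 3/2 := by intro t; simp [ha_def]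
  have ha_im : ∀ t : ℝ, (a t).im = t := by intro t; simp [ha_def]
  have ha_ne : ∀ t : ℝ, a t ≠ 0 := by
    intro t h
    have := congrArg Complex.re h
    rw [ha_re] at this; norm_num at this
  have hb_ne : ∀ t : ℝ, Z - a t ≠ 0 := by
    intro t h
    have := congrArg Complex.re h
    rw [Complex.sub_re, ha_re, hZre] at this; norm_num at this
  have hna : ∀ t : ℝ, ‖a t‖^2 = 9/4 + t^2 := by
    intro t; rw [aux_norm_sq, ha_re, ha_im]; norm_num
  have hnb : ∀ t : ℝ, ‖Z - a t‖^2 = 1 + (Z.im - t)^2 := by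
    intro t; rw [aux_norm_sq, Complex.sub_re, Complex.sub_im, ha_re, ha_im, hZre]; ring
  have hma : Measurable a := by
    apply Measurable.add measurable_const
    exact measurable_const.mul Complex.measurable_ofReal
  have hmb : Measurable (fun t : ℝ => Z - a t) := measurable_const.sub hma
  set f : ℝ → ℂ := fun t => a t * W t with hf_def
  set g1 : ℝ → ℂ := fun t => (a t)⁻¹ with hg1_def
  set g2 : ℝ → ℂ := fun t => (Z - a t)⁻¹ with hg2_def
  set g : ℝ → ℂ := fun t => (a t * (Z - a t))⁻¹ with hg_def
  have hmg1 : Measurable g1 := hma.inv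
  have hmg2 : Measurable g2 := hmb.inv
  have hmg : Measurable g := (hma.mul hmb).inv
  -- squared norms of g1, g2
  have hng1 : ∀ t : ℝ, ‖g1 t‖^2 = (9/4 + t^2)⁻¹ := by
    intro t; rw [hg1_def]; simp only [norm_inv, inv_pow]; rw [hna]
  have hng2 : ∀ t : ℝ, ‖g2 t‖^2 = (1 + (Z.im - t)^2)⁻¹ := by
    intro t; rw [hg2_def]; simp only [norm_inv, inv_pow]; rw [hnb]
  have hig1 : Integrable (fun t : ℝ => ‖g1 t‖^2) :=
    aux_int94.congr (Eventually.of_forall fun t => (hng1 t).symm)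
  have hig2 : Integrable (fun t : ℝ => ‖g2 t‖^2) :=
    (aux_intc Z.im).congr (Eventually.of_forall fun t => (hng2 t).symm)
  have hg1L2 : MemLp g1 2 volume :=
    (memLp_two_iff_integrable_sq_norm hmg1.aestronglyMeasurable).mpr hig1
  have hg2L2 : MemLp g2 2 volume :=
    (memLp_two_iff_integrable_sq_norm hmg2.aestronglyMeasurable).mpr hig2
  have hvg1 : (∫ t : ℝ, ‖g1 t‖^2) = 2/3*π := by
    rw [← aux_val94]; exact integral_congr_ae (Eventually.of_forall fun t => hng1 t)
  have hvg2 : (∫ t : ℝ, ‖g2 t‖^2) = π := by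
    rw [← aux_valc Z.im]; exact integral_congr_ae (Eventually.of_forall fun t => hng2 t)
  -- partial fractions
  have hpf : ∀ t : ℝ, g t = Z⁻¹ * (g1 t + g2 t) := by
    intro t
    have h1 := ha_ne t; have h2 := hb_ne t
    rw [hg_def, hg1_def, hg2_def]
    field_simp
    ring
  have hgL2 : MemLp g 2 volume := by
    refine MemLp.ae_eq (Eventually.of_forall fun t => (hpf t).symm) ?_
    exact (hg1L2.add hg2L2).const_mul Z⁻¹
  have higsq : Integrable (fun t : ℝ => ‖g t‖^2) :=
    (memLp_two_iff_integrable_sq_norm hmg.aestronglyMeasurable).mp hgL2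
  have hfL2 : MemLp f 2 volume := hW
  have hifsq : Integrable (fun t : ℝ => ‖f t‖^2) :=
    (memLp_two_iff_integrable_sq_norm hW.1).mp hW
  -- integrability of the product
  have hfg_int : Integrable (fun t : ℝ => f t * g t) := by
    refine ((hifsq.add higsq).const_mul (1/2)).mono'
      (hW.1.mul hmg.aestronglyMeasurable) (Eventually.of_forall fun t => ?_)
    simp only [norm_mul, Pi.add_apply]
    nlinarith [sq_nonneg (‖f t‖ - ‖g t‖), norm_nonneg (f t), norm_nonneg (g t)]
  have hEq : ∀ t : ℝ, W t / (Z - a t) = f t * g t := by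
    intro t
    have h1 := ha_ne t; have h2 := hb_ne t
    rw [hf_def, hg_def]
    field_simp
  constructor
  · exact hfg_int.congr (Eventually.of_forall fun t => (hEq t).symm)
  · -- the bound
    set A : ℝ := ∫ t : ℝ, ‖f t‖^2 with hA_def
    have hA_nonneg : 0 ≤ A := integral_nonneg fun t => sq_nonneg _
    -- Cauchy-Schwarz for f, g
    have hCS : (∫ t : ℝ, ‖f t‖ * ‖g t‖) ≤
        Real.sqrt A * Real.sqrt (∫ t : ℝ, ‖g t‖^2) := by
      have h := integral_mul_norm_le_Lp_mul_Lq aux_conj (aux_two ▸ hfL2) (aux_two ▸ hgL2)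
      simp only [aux_rpow_two] at h
      rw [Real.sqrt_eq_rpow, Real.sqrt_eq_rpow]
      exact h
    -- Cauchy-Schwarz for g1, g2
    have hCS2 : (∫ t : ℝ, ‖g1 t‖ * ‖g2 t‖) ≤ Real.sqrt (2/3*π) * Real.sqrt π := by
      have h := integral_mul_norm_le_Lp_mul_Lq aux_conj (aux_two ▸ hg1L2) (aux_two ▸ hg2L2)
      simp only [aux_rpow_two] at h
      rw [hvg1, hvg2] at h
      rw [Real.sqrt_eq_rpow, Real.sqrt_eq_rpow]
      exact h
    have hg12_int : Integrable (fun t : ℝ => ‖g1 t‖ * ‖g2 t‖) := by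
      refine ((hig1.add hig2).const_mul (1/2)).mono'
        (hmg1.norm.aestronglyMeasurable.mul hmg2.norm.aestronglyMeasurable)
        (Eventually.of_forall fun t => ?_)
      rw [Real.norm_of_nonneg (mul_nonneg (norm_nonneg _) (norm_nonneg _))]
      simp only [Pi.add_apply]
      nlinarith [sq_nonneg (‖g1 t‖ - ‖g2 t‖)]
    -- bound on ∫ ‖g‖²
    have hB : (∫ t : ℝ, ‖g t‖^2) ≤ ‖Z‖⁻¹^2 * (Real.sqrt (2/3*π) + Real.sqrt π)^2 := by
      have step0 : ∀ t : ℝ, ‖g t‖^2 = ‖Z‖⁻¹^2 * ‖g1 t + g2 t‖^2 := by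
        intro t
        rw [hpf t, norm_mul, norm_inv, mul_pow]
      have step1 : (∫ t : ℝ, ‖g1 t + g2 t‖^2) ≤
          (∫ t : ℝ, ‖g1 t‖^2) + 2 * (∫ t : ℝ, ‖g1 t‖ * ‖g2 t‖) + (∫ t : ℝ, ‖g2 t‖^2) := by
        have hplusint : Integrable (fun t : ℝ => ‖g1 t‖^2 + 2 * (‖g1 t‖ * ‖g2 t‖) + ‖g2 t‖^2) :=
          (hig1.add (hg12_int.const_mul 2)).add hig2
        have hle : (∫ t : ℝ, ‖g1 t + g2 t‖^2) ≤
            ∫ t : ℝ, ‖g1 t‖^2 + 2 * (‖g1 t‖ * ‖g2 t‖) + ‖g2 t‖^2 := by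
          refine integral_mono ?_ hplusint fun t => ?_
          · exact (memLp_two_iff_integrable_sq_norm
              ((hmg1.add hmg2).aestronglyMeasurable)).mp (hg1L2.add hg2L2)
          · have h := norm_add_le (g1 t) (g2 t)
            nlinarith [norm_nonneg (g1 t + g2 t), norm_nonneg (g1 t), norm_nonneg (g2 t)]
        have split : (∫ t : ℝ, (‖g1 t‖^2 + 2 * (‖g1 t‖ * ‖g2 t‖) + ‖g2 t‖^2)) =
            (∫ t : ℝ, ‖g1 t‖^2) + 2 * (∫ t : ℝ, ‖g1 t‖ * ‖g2 t‖) + (∫ t : ℝ, ‖g2 t‖^2) := by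
          have hI1 : Integrable (fun t : ℝ => ‖g1 t‖^2 + 2 * (‖g1 t‖ * ‖g2 t‖)) volume :=
            hig1.add (hg12_int.const_mul 2)
          have hI2 : Integrable (fun t : ℝ => 2 * (‖g1 t‖ * ‖g2 t‖)) volume :=
            hg12_int.const_mul 2
          rw [integral_add hI1 hig2, integral_add hig1 hI2, integral_const_mul]
        linarith [split ▸ hle]
      calc (∫ t : ℝ, ‖g t‖^2) = ‖Z‖⁻¹^2 * (∫ t : ℝ, ‖g1 t + g2 t‖^2) := by
            simp_rw [step0]; rw [integral_const_mul]
        _ ≤ ‖Z‖⁻¹^2 * ((2/3*π) + 2 * (Real.sqrt (2/3*π) * Real.sqrt π) + π) := by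
            apply mul_le_mul_of_nonneg_left _ (by positivity)
            calc (∫ t : ℝ, ‖g1 t + g2 t‖^2) ≤ _ := step1
              _ ≤ _ := by rw [hvg1, hvg2]; linarith [hCS2]
        _ = ‖Z‖⁻¹^2 * (Real.sqrt (2/3*π) + Real.sqrt π)^2 := by
            rw [add_sq, Real.sq_sqrt (by positivity), Real.sq_sqrt Real.pi_pos.le]
            ring
    have hsqrtB : Real.sqrt (∫ t : ℝ, ‖g t‖^2) ≤
        ‖Z‖⁻¹ * (Real.sqrt (2/3*π) + Real.sqrt π) := by
      have h := Real.sqrt_le_sqrt hB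
      rwa [Real.sqrt_mul (by positivity), Real.sqrt_sq (by positivity),
        Real.sqrt_sq (by positivity)] at h
    -- assemble
    have hnorm_int : ‖∫ t : ℝ, W t / (Z - a t)‖ ≤
        Real.sqrt A * (‖Z‖⁻¹ * (Real.sqrt (2/3*π) + Real.sqrt π)) := by
      calc ‖∫ t : ℝ, W t / (Z - a t)‖ = ‖∫ t : ℝ, f t * g t‖ := by
            congr 1; exact integral_congr_ae (Eventually.of_forall fun t => hEq t)
        _ ≤ ∫ t : ℝ, ‖f t * g t‖ := norm_integral_le_integral_norm _
        _ = ∫ t : ℝ, ‖f t‖ * ‖g t‖ := by simp_rw [norm_mul]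
        _ ≤ Real.sqrt A * Real.sqrt (∫ t : ℝ, ‖g t‖^2) := hCS
        _ ≤ Real.sqrt A * (‖Z‖⁻¹ * (Real.sqrt (2/3*π) + Real.sqrt π)) := by
            exact mul_le_mul_of_nonneg_left hsqrtB (Real.sqrt_nonneg _)
    have hA_eq : (∫ t : ℝ, ‖a t‖ ^ 2 * ‖W t‖ ^ 2) = A := by
      rw [hA_def]
      refine integral_congr_ae (Eventually.of_forall fun t => ?_)
      simp only [hf_def, norm_mul, mul_pow]
    rw [norm_mul, Complex.norm_real, Real.norm_of_nonneg (by positivity : (0:ℝ) ≤ 1/(2*π))]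
    rw [hA_eq]
    have key : (1/(2*π)) * (Real.sqrt (2/3*π) + Real.sqrt π) =
        (Real.sqrt (1/3) + Real.sqrt (1/2)) * Real.sqrt (1/(2*π)) := by
      have hπ := Real.pi_pos
      have h1 : Real.sqrt (1/(2*π)) * Real.sqrt (2/3*π) = Real.sqrt (1/3) := by
        rw [← Real.sqrt_mul (by positivity)]
        congr 1; field_simp
      have h2 : Real.sqrt (1/(2*π)) * Real.sqrt π = Real.sqrt (1/2) := by
        rw [← Real.sqrt_mul (by positivity)]
        congr 1; field_simp
      calc (1/(2*π)) * (Real.sqrt (2/3*π) + Real.sqrt π)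
          = Real.sqrt (1/(2*π)) * Real.sqrt (1/(2*π)) * (Real.sqrt (2/3*π) + Real.sqrt π) := by
            rw [Real.mul_self_sqrt (by positivity)]
        _ = (Real.sqrt (1/(2*π)) * Real.sqrt (2/3*π)
              + Real.sqrt (1/(2*π)) * Real.sqrt π) * Real.sqrt (1/(2*π)) := by ring
        _ = _ := by rw [h1, h2]
    calc (1/(2*π)) * ‖∫ t : ℝ, W t / (Z - a t)‖
        ≤ (1/(2*π)) * (Real.sqrt A * (‖Z‖⁻¹ * (Real.sqrt (2/3*π) + Real.sqrt π))) := by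
          exact mul_le_mul_of_nonneg_left hnorm_int (by positivity)
      _ = (1/‖Z‖) * (Real.sqrt (1/3) + Real.sqrt (1/2)) * (Real.sqrt (1/(2*π)) * Real.sqrt A) := by
          linear_combination (Real.sqrt A * ‖Z‖⁻¹) * key
      _ = (1/‖Z‖) * (Real.sqrt (1/3) + Real.sqrt (1/2)) * Real.sqrt ((1/(2*π)) * A) := by
          rw [Real.sqrt_mul (by positivity)]

end
end

section
/- Let ρ and ρ' be nontrivial zeros of the Riemann zeta function ζ, let m = m_ρ, and let c_0, c_1, c_2, … be the Taylor coefficients at ρ of the analytic function equal to (s−ρ)^m/ζ(s) for s ≠ ρ near ρ (a removable singularity, with c_0 ≠ 0). Let 0 ≤ j < m, let 1 ≤ j' ≤ m_{ρ'}, and let X be the function analytic in a neighborhood of ρ with X(s) = ζ(s)/(s−ρ')^{j'} for s ≠ ρ' (again removing the singularity at ρ' if ρ' = ρ, which is removable since j' ≤ m_{ρ'}). Then Σ_{i=0}^{j} c_{j−i} · X^{(i)}(ρ)/i! equals 1 if ρ' = ρ and j' = m − j, and equals 0 otherwise. (This expresses the biorthogonality of the evaluator system to the system of the functions ζ(s)/(s−ρ')^{j'}.)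 -/
open MeasureTheory Set Complex Filter Real
noncomputable section

/-- `ρ` is a nontrivial zero of the Riemann zeta function. -/
def NontrivialZero (ρ : ℂ) : Prop := riemannZeta ρ = 0 ∧ 0 < ρ.re ∧ ρ.re < 1

/-- The order of vanishing of a function `g : ℂ → ℂ` at a point `ρ`: the least `j`
such that the `j`-th derivative of `g` at `ρ` is nonzero. -/
def ordAt (g : ℂ → ℂ) (ρ : ℂ) : ℕ := sInf {j : ℕ | iteratedDeriv j g ρ ≠ 0}

lemma coeff_eq_iteratedDeriv {f : ℂ → ℂ} {p : FormalMultilinearSeries ℂ ℂ ℂ} {z : ℂ}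
    (h : HasFPowerSeriesAt f p z) (n : ℕ) :
    p.coeff n = iteratedDeriv n f z / (n.factorial : ℂ) := by
  obtain ⟨r, hr⟩ := h
  have h1 := hr.factorial_smul (1 : ℂ) n
  rw [iteratedDeriv_eq_iteratedFDeriv, ← h1]
  have h2 : (p n fun _ => (1:ℂ)) = p.coeff n := by
    rw [FormalMultilinearSeries.apply_eq_pow_smul_coeff]; simp
  rw [h2, nsmul_eq_mul]
  field_simp [Nat.factorial_ne_zero]

lemma iteratedDeriv_cmul {k : ℕ} {f : ℂ → ℂ} (h : ContDiff ℂ (k : ℕ∞) f) (a x : ℂ) :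
    iteratedDeriv k (fun s => a * f s) x = a * iteratedDeriv k f x := by
  have hfe : (fun s => a * f s) = a • f := by funext s; simp [smul_eq_mul]
  rw [hfe, iteratedDeriv_eq_iteratedFDeriv, iteratedDeriv_eq_iteratedFDeriv,
    iteratedFDeriv_const_smul_apply (i := k) h.contDiffAt]
  simp

lemma iteratedDeriv_const_fun (k : ℕ) (a x : ℂ) :
    iteratedDeriv k (fun _ : ℂ => a) x = if k = 0 then a else 0 := by
  induction k generalizing a x with
  | zero => simp
  | succ k ih =>
    rw [iteratedDeriv_succ']
    simp only [deriv_const']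
    simp [ih]

lemma iteratedDeriv_monomial (c : ℂ) : ∀ (k n : ℕ),
    iteratedDeriv k (fun s : ℂ => (s - c) ^ n) c = if k = n then (n.factorial : ℂ) else 0 := by
  intro k
  induction k with
  | zero =>
    intro n
    cases n with
    | zero => simp
    | succ n => simp [Nat.succ_ne_zero]
  | succ k ih =>
    intro n
    rw [iteratedDeriv_succ']
    cases n with
    | zero =>
      simp only [pow_zero]
      rw [deriv_const']
      rw [iteratedDeriv_const_fun]
      simp
    | succ n =>
      have hD : deriv (fun s : ℂ => (s - c) ^ (n + 1)) = fun s => ((n:ℂ) + 1) * (s - c) ^ n := by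
        funext s
        have h1 : HasDerivAt (fun s : ℂ => (s - c) ^ (n + 1))
            (((n:ℂ) + 1) * (s - c) ^ n * 1) s := by
          have := ((hasDerivAt_id s).sub_const c).pow (n + 1)
          simpa [Pi.pow_def] using this
        simpa using h1.deriv
      rw [hD]
      have hcd : ContDiff ℂ (k : ℕ∞) (fun s : ℂ => (s - c) ^ n) :=
        ((contDiff_id.sub contDiff_const).pow n).of_le le_top
      rw [iteratedDeriv_cmul hcd]
      rw [ih n]
      by_cases hk : k = n
      · subst hk
        rw [if_pos rfl, if_pos rfl, Nat.factorial_succ]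
        push_cast
        ring
      · have : ¬ (k + 1 = n + 1) := by omega
        simp [hk, this]

lemma mulCoeff {f g : ℂ → ℂ} {z : ℂ} (hf : AnalyticAt ℂ f z) (hg : AnalyticAt ℂ g z) (n : ℕ) :
    iteratedDeriv n (fun s => f s * g s) z / (n.factorial : ℂ) =
      ∑ i ∈ Finset.range (n + 1),
        (iteratedDeriv (n - i) f z / ((n - i).factorial : ℂ)) *
        (iteratedDeriv i g z / (i.factorial : ℂ)) := by
  obtain ⟨p, hp⟩ := hf
  obtain ⟨q, hq⟩ := hg
  set e : ℕ → ℂ := fun k => ∑ i ∈ Finset.range (k + 1), p.coeff i * q.coeff (k - i) with he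
  obtain ⟨r1, hr1⟩ := hp
  obtain ⟨r2, hr2⟩ := hq
  have key : ∀ y : ℂ, (‖y‖₊ : ENNReal) < min r1 r2 →
      HasSum (fun k => e k * y ^ k) (f (z + y) * g (z + y)) ∧
      Summable (fun k => ‖e k * y ^ k‖) := by
    intro y hy
    have hy1 : y ∈ Metric.eball (0:ℂ) r1 := by
      rw [mem_emetric_ball_zero_iff]; exact hy.trans_le (min_le_left _ _)
    have hy2 : y ∈ Metric.eball (0:ℂ) r2 := by
      rw [mem_emetric_ball_zero_iff]; exact hy.trans_le (min_le_right _ _)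
    have happ : ∀ (P : FormalMultilinearSeries ℂ ℂ ℂ) (k : ℕ),
        (P k fun _ => y) = P.coeff k * y ^ k := fun P k => by
      rw [FormalMultilinearSeries.apply_eq_pow_smul_coeff, smul_eq_mul, mul_comm]
    have hsf : HasSum (fun k => p.coeff k * y ^ k) (f (z + y)) := by
      have h := hr1.hasSum hy1
      have heq : (fun k => p k fun _ => y) = fun k => p.coeff k * y ^ k :=
        funext fun k => happ p k
      rwa [heq] at h
    have hsg : HasSum (fun k => q.coeff k * y ^ k) (g (z + y)) := by
      have h := hr2.hasSum hy2
      have heq : (fun k => q k fun _ => y) = fun k => q.coeff k * y ^ k :=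
        funext fun k => happ q k
      rwa [heq] at h
    have hnf : Summable (fun k => ‖p.coeff k * y ^ k‖) := by
      have hrad : (‖y‖₊ : ENNReal) < p.radius :=
        lt_of_lt_of_le (hy.trans_le (min_le_left _ _)) hr1.r_le
      have hs := p.summable_norm_mul_pow hrad
      refine hs.of_nonneg_of_le (fun _ => norm_nonneg _) (fun k => ?_)
      rw [← happ p k]
      calc ‖p k fun _ => y‖ ≤ ‖p k‖ * ∏ _i : Fin k, ‖y‖ := (p k).le_opNorm _
        _ = ‖p k‖ * (‖y‖₊ : ℝ) ^ k := by simp [Finset.prod_const]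
    have hng : Summable (fun k => ‖q.coeff k * y ^ k‖) := by
      have hrad : (‖y‖₊ : ENNReal) < q.radius :=
        lt_of_lt_of_le (hy.trans_le (min_le_right _ _)) hr2.r_le
      have hs := q.summable_norm_mul_pow hrad
      refine hs.of_nonneg_of_le (fun _ => norm_nonneg _) (fun k => ?_)
      rw [← happ q k]
      calc ‖q k fun _ => y‖ ≤ ‖q k‖ * ∏ _i : Fin k, ‖y‖ := (q k).le_opNorm _
        _ = ‖q k‖ * (‖y‖₊ : ℝ) ^ k := by simp [Finset.prod_const]
    have hfun : ∀ kk : ℕ, ∑ i ∈ Finset.range (kk + 1),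
        (p.coeff i * y ^ i) * (q.coeff (kk - i) * y ^ (kk - i)) = e kk * y ^ kk := by
      intro kk
      rw [he, Finset.sum_mul]
      refine Finset.sum_congr rfl fun i hi => ?_
      have hkn : i + (kk - i) = kk := by
        have := Finset.mem_range.mp hi; omega
      rw [mul_mul_mul_comm, ← pow_add, hkn]
    have hnorm : Summable (fun k => ‖e k * y ^ k‖) := by
      have h := summable_norm_sum_mul_range_of_summable_norm hnf hng
      have heq : (fun k => ‖∑ i ∈ Finset.range (k + 1),
          (p.coeff i * y ^ i) * (q.coeff (k - i) * y ^ (k - i))‖) =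
          fun k => ‖e k * y ^ k‖ := funext fun k => by rw [hfun k]
      rwa [heq] at h
    refine ⟨?_, hnorm⟩
    refine (hnorm.of_norm.hasSum_iff).mpr ?_
    have ht := tsum_mul_tsum_eq_tsum_sum_range_of_summable_norm hnf hng
    rw [hsf.tsum_eq, hsg.tsum_eq] at ht
    rw [ht]
    exact tsum_congr fun kk => (hfun kk).symm
  obtain ⟨t, ht0, htR⟩ := ENNReal.lt_iff_exists_nnreal_btwn.mp (lt_min hr1.r_pos hr2.r_pos)
  have hE : HasFPowerSeriesAt (fun s => f s * g s) (FormalMultilinearSeries.ofScalars ℂ e) z := by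
    refine ⟨t, ?_, ht0, ?_⟩
    · apply FormalMultilinearSeries.le_radius_of_summable_norm
      have hnn : (‖(((t : ℝ) : ℂ))‖₊ : ENNReal) = (t : ENNReal) := by
        norm_cast
        ext
        simp [coe_nnnorm, _root_.abs_of_nonneg t.coe_nonneg]
      have hs := (key ((t : ℝ) : ℂ) (by rw [hnn]; exact htR)).2
      have heq : (fun k => ‖FormalMultilinearSeries.ofScalars ℂ e k‖ * (t : ℝ) ^ k) =
          fun k => ‖e k * ((t : ℝ) : ℂ) ^ k‖ := by
        funext k
        rw [FormalMultilinearSeries.ofScalars_norm, norm_mul, norm_pow, Complex.norm_real,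
          Real.norm_eq_abs, _root_.abs_of_nonneg t.coe_nonneg]
      rwa [heq]
    · intro y hy
      rw [mem_emetric_ball_zero_iff] at hy
      have hk := (key y (hy.trans htR)).1
      simpa only [FormalMultilinearSeries.ofScalars_apply_eq, smul_eq_mul] using hk
  have h0 := coeff_eq_iteratedDeriv hE n
  have hco : (FormalMultilinearSeries.ofScalars ℂ e).coeff n = e n := by
    simp [FormalMultilinearSeries.coeff, FormalMultilinearSeries.ofScalars, Pi.one_def]
  have hterm : ∀ i ∈ Finset.range (n + 1), p.coeff i * q.coeff (n - i) =
      (iteratedDeriv i f z / (i.factorial : ℂ)) *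
      (iteratedDeriv (n - i) g z / ((n - i).factorial : ℂ)) := fun i _ => by
    rw [coeff_eq_iteratedDeriv ⟨r1, hr1⟩, coeff_eq_iteratedDeriv ⟨r2, hr2⟩]
  rw [← h0, hco]
  show (∑ i ∈ Finset.range (n + 1), p.coeff i * q.coeff (n - i)) = _
  rw [Finset.sum_congr rfl hterm, ← Finset.sum_range_reflect]
  refine Finset.sum_congr rfl fun i hi => ?_
  have hi' : i ≤ n := by have := Finset.mem_range.mp hi; omega
  have h1 : n + 1 - 1 - i = n - i := by omega
  have h2 : n - (n - i) = i := by omega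
  rw [h1, h2]

lemma zeta_eventually_ne_zero {ρ : ℂ} (hρ : ρ.re < 1) :
    ∀ᶠ s in nhdsWithin ρ {ρ}ᶜ, riemannZeta s ≠ 0 := by
  have hρ1 : ρ ≠ 1 := by
    intro h; rw [h] at hρ; simp at hρ
  have hU : IsOpen {s : ℂ | s ≠ 1} := isOpen_ne
  have hd : DifferentiableOn ℂ riemannZeta {s : ℂ | s ≠ 1} :=
    fun s hs => (differentiableAt_riemannZeta hs).differentiableWithinAt
  have hζ : AnalyticOnNhd ℂ riemannZeta {s : ℂ | s ≠ 1} := hd.analyticOnNhd hU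
  rcases (hζ ρ hρ1).eventually_eq_zero_or_eventually_ne_zero with h | h
  · exfalso
    have hpc : IsPreconnected {s : ℂ | s ≠ 1} := by
      have h1 := isPathConnected_compl_singleton_of_one_lt_rank
        (by rw [Complex.rank_real_complex]; norm_num) (1 : ℂ)
      have h2 : ({(1:ℂ)}ᶜ : Set ℂ) = {s : ℂ | s ≠ 1} := rfl
      exact (h2 ▸ h1).isConnected.isPreconnected
    have hz := hζ.eqOn_zero_of_preconnected_of_eventuallyEq_zero hpc hρ1 h
    have h2 : riemannZeta 2 = 0 := hz (show (2:ℂ) ≠ 1 by norm_num)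
    exact riemannZeta_ne_zero_of_one_lt_re (by norm_num) h2
  · exact h

/-- Let `ρ, ρ'` be nontrivial zeros of `ζ`, `m = m_ρ`, and let
`c_0, c_1, …` be the Taylor coefficients at `ρ` of the analytic function equal to
`(s−ρ)^m/ζ(s)` for `s ≠ ρ` near `ρ`.  Let `0 ≤ j < m`, `1 ≤ j' ≤ m_{ρ'}`, and let `X` be
analytic near `ρ` with `X(s) = ζ(s)/(s−ρ')^{j'}` for `s ≠ ρ'`.  Then
`Σ_{i=0}^{j} c_{j−i}·X^{(i)}(ρ)/i!` equals `1` if `ρ' = ρ` and `j' = m − j`, and `0`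
otherwise. -/
theorem stmt14 (ρ ρ' : ℂ) (hρ : NontrivialZero ρ) (hρ' : NontrivialZero ρ')
    (m : ℕ) (hm : m = ordAt riemannZeta ρ)
    (H : ℂ → ℂ) (hH : AnalyticAt ℂ H ρ)
    (hHeq : ∀ᶠ s in nhdsWithin ρ {ρ}ᶜ, H s = (s - ρ) ^ m / riemannZeta s)
    (c : ℕ → ℂ) (hc : ∀ k : ℕ, c k = iteratedDeriv k H ρ / (k.factorial : ℂ))
    (j j' : ℕ) (hj : j < m) (hj'1 : 1 ≤ j') (hj'2 : j' ≤ ordAt riemannZeta ρ')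
    (X : ℂ → ℂ) (hX : AnalyticAt ℂ X ρ)
    (hXeq : ∀ᶠ s in nhds ρ, s ≠ ρ' → X s = riemannZeta s / (s - ρ') ^ j') :
    ∑ i ∈ Finset.range (j + 1), c (j - i) * (iteratedDeriv i X ρ / (i.factorial : ℂ)) =
      if ρ' = ρ ∧ j' = m - j then 1 else 0 := by
  have hζne : ∀ᶠ s in nhdsWithin ρ {ρ}ᶜ, riemannZeta s ≠ 0 := zeta_eventually_ne_zero hρ.2.2
  have hLHS : ∑ i ∈ Finset.range (j + 1), c (j - i) * (iteratedDeriv i X ρ / (i.factorial : ℂ))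
      = iteratedDeriv j (fun s => H s * X s) ρ / (j.factorial : ℂ) := by
    rw [mulCoeff hH hX j]
    exact (Finset.sum_congr rfl fun i _ => by rw [hc (j - i)])
  rw [hLHS]
  by_cases hcase : ρ' = ρ
  · subst hcase
    have hj'm : j' ≤ m := by rw [hm]; exact hj'2
    have hpunct : ∀ᶠ s in nhdsWithin ρ' {ρ'}ᶜ,
        H s * X s = (s - ρ') ^ (m - j') := by
      filter_upwards [hHeq, hζne, hXeq.filter_mono nhdsWithin_le_nhds,
        self_mem_nhdsWithin] with s h1 h2 h3 hs
      have hsρ : s ≠ ρ' := hs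
      have hsub : s - ρ' ≠ 0 := sub_ne_zero.mpr hsρ
      rw [h1, h3 hsρ, pow_sub₀ _ hsub hj'm]
      field_simp
    have hcont1 : ContinuousAt (fun s => H s * X s) ρ' :=
      hH.continuousAt.mul hX.continuousAt
    have hcont2 : ContinuousAt (fun s : ℂ => (s - ρ') ^ (m - j')) ρ' := by fun_prop
    have hpunct' : (fun s => H s * X s) =ᶠ[nhdsWithin ρ' {ρ'}ᶜ]
        (fun s : ℂ => (s - ρ') ^ (m - j')) := hpunct
    have hval : H ρ' * X ρ' = (ρ' - ρ') ^ (m - j') :=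
      tendsto_nhds_unique (hcont1.tendsto.mono_left nhdsWithin_le_nhds)
        (Filter.Tendsto.congr' hpunct'.symm (hcont2.tendsto.mono_left nhdsWithin_le_nhds))
    have hfull : ∀ᶠ s in nhds ρ', H s * X s = (s - ρ') ^ (m - j') := by
      rw [← nhdsNE_sup_pure ρ', Filter.eventually_sup]
      exact ⟨hpunct, by rwa [Filter.eventually_pure]⟩
    have hiter : iteratedDeriv j (fun s => H s * X s) ρ' =
        iteratedDeriv j (fun s : ℂ => (s - ρ') ^ (m - j')) ρ' :=
      Filter.EventuallyEq.iteratedDeriv_eq j hfull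
    rw [hiter, iteratedDeriv_monomial ρ' j (m - j')]
    by_cases hjj : j = m - j'
    · rw [if_pos hjj, if_pos ⟨rfl, by omega⟩, hjj]
      exact div_self (Nat.cast_ne_zero.mpr (Nat.factorial_ne_zero _))
    · rw [if_neg hjj, zero_div, if_neg]
      rintro ⟨-, h2⟩
      exact hjj (by omega)
  · have hρρ' : ρ ≠ ρ' := fun h => hcase h.symm
    have hsubne : ρ - ρ' ≠ 0 := sub_ne_zero.mpr hρρ'
    set g : ℂ → ℂ := fun s => ((s - ρ') ^ j')⁻¹ with hgdef
    have hsub : AnalyticAt ℂ (fun s : ℂ => (s - ρ') ^ j') ρ :=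
      ((analyticAt_id.sub analyticAt_const).pow j')
    have hg : AnalyticAt ℂ g ρ := hsub.inv (pow_ne_zero _ hsubne)
    have hmono : AnalyticAt ℂ (fun s : ℂ => (s - ρ) ^ m) ρ :=
      ((analyticAt_id.sub analyticAt_const).pow m)
    have hpunct : ∀ᶠ s in nhdsWithin ρ {ρ}ᶜ, H s * X s = (s - ρ) ^ m * g s := by
      filter_upwards [hHeq, hζne, hXeq.filter_mono nhdsWithin_le_nhds,
        (eventually_ne_nhds hρρ').filter_mono nhdsWithin_le_nhds] with s h1 h2 h3 h4
      rw [h1, h3 h4, hgdef]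
      have hs' : s - ρ' ≠ 0 := sub_ne_zero.mpr h4
      field_simp
    have hcont1 : ContinuousAt (fun s => H s * X s) ρ :=
      hH.continuousAt.mul hX.continuousAt
    have hcont2 : ContinuousAt (fun s : ℂ => (s - ρ) ^ m * g s) ρ :=
      (hmono.mul hg).continuousAt
    have hpunct' : (fun s => H s * X s) =ᶠ[nhdsWithin ρ {ρ}ᶜ]
        (fun s : ℂ => (s - ρ) ^ m * g s) := hpunct
    have hval : H ρ * X ρ = (ρ - ρ) ^ m * g ρ :=
      tendsto_nhds_unique (hcont1.tendsto.mono_left nhdsWithin_le_nhds)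
        (Filter.Tendsto.congr' hpunct'.symm (hcont2.tendsto.mono_left nhdsWithin_le_nhds))
    have hfull : ∀ᶠ s in nhds ρ, H s * X s = (s - ρ) ^ m * g s := by
      rw [← nhdsNE_sup_pure ρ, Filter.eventually_sup]
      exact ⟨hpunct, by rwa [Filter.eventually_pure]⟩
    have hiter : iteratedDeriv j (fun s => H s * X s) ρ =
        iteratedDeriv j (fun s : ℂ => (s - ρ) ^ m * g s) ρ :=
      Filter.EventuallyEq.iteratedDeriv_eq j hfull
    rw [hiter]
    have h2 := mulCoeff hmono hg j
    rw [h2, if_neg (fun h => hcase h.1)]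
    apply Finset.sum_eq_zero
    intro i hi
    have hji : j - i ≠ m := by
      have := Finset.mem_range.mp hi; omega
    rw [iteratedDeriv_monomial ρ (j - i) m, if_neg hji]
    simp

end
end

section
/- Let U ⊆ ℂ be open, let h and F be analytic on U, let ρ ∈ U be a zero of h of finite order m ≥ 1, and let Z ∈ U with Z ≠ ρ. Let c_0, c_1, c_2, … be the Taylor coefficients at ρ of the analytic function equal to (s−ρ)^m/h(s) near ρ (removable singularity at ρ). Then for all sufficiently small r > 0, (1/(2πi)) ∮_{|s−ρ|=r} F(s)/(h(s)·(Z−s)) ds = Σ_{j=0}^{m−1} Σ_{i=0}^{j} c_{j−i} · (F^{(i)}(ρ)/i!) · (Z−ρ)^{−(m−j)}, where the contour is the positively oriented circle of radius r centered at ρ. (This is the residue at ρ of F(s)/(h(s)(Z−s)) expressed through the evaluators F ↦ F^{(i)}(ρ).) -/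
open MeasureTheory Set Complex Filter Real
noncomputable section

open Topology

lemma choose_sum_aux (A B : ℕ → ℂ) (n : ℕ) :
    ∑ i ∈ Finset.range (n+1), (n.choose i : ℂ) * (A (i+1) * B (n-i))
      + ∑ i ∈ Finset.range (n+1), (n.choose i : ℂ) * (A i * B (n+1-i))
    = ∑ i ∈ Finset.range (n+2), ((n+1).choose i : ℂ) * (A i * B (n+1-i)) := by
  have key : ∑ i ∈ Finset.range (n+1), (n.choose i : ℂ) * (A i * B (n+1-i))
      = ∑ i ∈ Finset.range (n+1), (n.choose (i+1) : ℂ) * (A (i+1) * B (n-i))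
        + (n.choose 0 : ℂ) * (A 0 * B (n+1)) := by
    have h0 : ∑ i ∈ Finset.range (n+2), (n.choose i : ℂ) * (A i * B (n+1-i))
        = ∑ i ∈ Finset.range (n+1), (n.choose i : ℂ) * (A i * B (n+1-i)) := by
      rw [Finset.sum_range_succ, Nat.choose_succ_self]
      simp
    rw [← h0, Finset.sum_range_succ']
    simp [Nat.succ_sub_succ]
  conv_rhs => rw [Finset.sum_range_succ']
  rw [key]
  simp only [Nat.succ_sub_succ, Nat.choose_succ_succ, Nat.cast_add, add_mul,
    Finset.sum_add_distrib, Nat.choose_zero_right, Nat.cast_one]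
  simp only [Nat.succ_eq_add_one, Nat.sub_zero, one_mul, Nat.add_comm 1 n]
  ring

lemma analyticAt_deriv' {f : ℂ → ℂ} {x : ℂ} (hf : AnalyticAt ℂ f x) :
    AnalyticAt ℂ (deriv f) x :=
  (AnalyticOnNhd.deriv (fun y hy => hy : AnalyticOnNhd ℂ f {y | AnalyticAt ℂ f y})) x hf

lemma iteratedDeriv_add_analytic {f g : ℂ → ℂ} {x : ℂ} (hf : AnalyticAt ℂ f x)
    (hg : AnalyticAt ℂ g x) (n : ℕ) :
    iteratedDeriv n (fun s => f s + g s) x = iteratedDeriv n f x + iteratedDeriv n g x := by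
  induction n generalizing f g with
  | zero => simp
  | succ n ih =>
    rw [iteratedDeriv_succ', iteratedDeriv_succ', iteratedDeriv_succ']
    have h1 : deriv (fun s => f s + g s) =ᶠ[𝓝 x] fun s => deriv f s + deriv g s := by
      filter_upwards [hf.eventually_analyticAt, hg.eventually_analyticAt] with y hfy hgy
      exact deriv_fun_add hfy.differentiableAt hgy.differentiableAt
    rw [h1.iteratedDeriv_eq]
    exact ih (analyticAt_deriv' hf) (analyticAt_deriv' hg)

lemma iteratedDeriv_mul_analytic {x : ℂ} (n : ℕ) :
    ∀ (f g : ℂ → ℂ), AnalyticAt ℂ f x → AnalyticAt ℂ g x →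
    iteratedDeriv n (fun s => f s * g s) x =
      ∑ i ∈ Finset.range (n + 1),
        (n.choose i : ℂ) * (iteratedDeriv i f x * iteratedDeriv (n - i) g x) := by
  induction n with
  | zero => intro f g _ _; simp
  | succ n ih =>
    intro f g hf hg
    rw [iteratedDeriv_succ']
    have h1 : deriv (fun s => f s * g s) =ᶠ[𝓝 x]
        fun s => deriv f s * g s + f s * deriv g s := by
      filter_upwards [hf.eventually_analyticAt, hg.eventually_analyticAt] with y hfy hgy
      exact deriv_mul hfy.differentiableAt hgy.differentiableAt
    rw [h1.iteratedDeriv_eq,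
      iteratedDeriv_add_analytic (f := fun s => deriv f s * g s) (g := fun s => f s * deriv g s)
        ((analyticAt_deriv' hf).mul hg) (hf.mul (analyticAt_deriv' hg)),
      ih _ _ (analyticAt_deriv' hf) hg, ih _ _ hf (analyticAt_deriv' hg)]
    simp only [← iteratedDeriv_succ']
    rw [← choose_sum_aux (fun i => iteratedDeriv i f x) (fun i => iteratedDeriv i g x) n]
    congr 1
    refine Finset.sum_congr rfl fun i hi => ?_
    have hni : n - i + 1 = n + 1 - i := by
      have := Finset.mem_range.mp hi; omega
    rw [hni]

lemma taylorCoeff_mul_analytic {f g : ℂ → ℂ} {x : ℂ} (hf : AnalyticAt ℂ f x)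
    (hg : AnalyticAt ℂ g x) (n : ℕ) :
    iteratedDeriv n (fun s => f s * g s) x / (n.factorial : ℂ) =
      ∑ i ∈ Finset.range (n + 1),
        (iteratedDeriv i f x / (i.factorial : ℂ)) *
          (iteratedDeriv (n - i) g x / ((n - i).factorial : ℂ)) := by
  rw [iteratedDeriv_mul_analytic n f g hf hg, Finset.sum_div]
  refine Finset.sum_congr rfl fun i hi => ?_
  have hin : i ≤ n := by have := Finset.mem_range.mp hi; omega
  have hfac : ((n.choose i : ℕ) : ℂ) * (i.factorial : ℂ) * ((n - i).factorial : ℂ)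
      = (n.factorial : ℂ) := by
    exact_mod_cast congrArg (Nat.cast : ℕ → ℂ)
      (Nat.choose_mul_factorial_mul_factorial hin)
  have h1 : (i.factorial : ℂ) ≠ 0 := Nat.cast_ne_zero.mpr i.factorial_ne_zero
  have h2 : ((n - i).factorial : ℂ) ≠ 0 := Nat.cast_ne_zero.mpr (n - i).factorial_ne_zero
  have h3 : (n.factorial : ℂ) ≠ 0 := Nat.cast_ne_zero.mpr n.factorial_ne_zero
  field_simp
  linear_combination iteratedDeriv i f x * iteratedDeriv (n - i) g x * hfac

lemma tri_sum (t : ℕ → ℕ → ℂ) (n : ℕ) :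
    ∑ a ∈ Finset.range (n+1), ∑ i ∈ Finset.range (n+1-a), t a i
      = ∑ j ∈ Finset.range (n+1), ∑ i ∈ Finset.range (j+1), t (j-i) i := by
  rw [Finset.sum_sigma', Finset.sum_sigma']
  refine Finset.sum_bij' (fun p _ => ⟨p.1 + p.2, p.2⟩) (fun p _ => ⟨p.1 - p.2, p.2⟩)
    ?_ ?_ ?_ ?_ ?_ <;>
    simp only [Finset.mem_sigma, Finset.mem_range, Sigma.forall] <;>
    intro a b hab <;>
    first
      | omega
      | (ext <;> simp <;> omega)
      | (congr 1; omega)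

lemma iteratedDeriv_sub_inv (Z : ℂ) (k : ℕ) :
    ∀ s : ℂ, s ≠ Z →
      iteratedDeriv k (fun u => (Z - u)⁻¹) s = (k.factorial : ℂ) * (Z - s) ^ (-(k + 1) : ℤ) := by
  induction k with
  | zero =>
    intro s hs
    simp [zpow_neg, zpow_one]
  | succ k ih =>
    intro s hs
    rw [iteratedDeriv_succ]
    have hev : iteratedDeriv k (fun u => (Z - u)⁻¹) =ᶠ[𝓝 s]
        fun u => (k.factorial : ℂ) * (Z - u) ^ (-(k + 1) : ℤ) := by
      filter_upwards [isOpen_ne.mem_nhds hs] with u hu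
      exact ih u hu
    rw [hev.deriv_eq]
    have hZs : Z - s ≠ 0 := sub_ne_zero.mpr (Ne.symm hs)
    have h1 : HasDerivAt (fun u : ℂ => Z - u) (-1) s := by
      simpa using (hasDerivAt_id s).const_sub Z
    have h2 : HasDerivAt (fun u : ℂ => (Z - u) ^ (-(k + 1) : ℤ))
        (((-(k + 1) : ℤ) : ℂ) * (Z - s) ^ ((-(k + 1) : ℤ) - 1) * (-1)) s :=
      (hasDerivAt_zpow (-(k + 1) : ℤ) (Z - s) (Or.inl hZs)).comp s h1
    rw [deriv_const_mul _ h2.differentiableAt, h2.deriv]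
    have h3 : ((-(k+1) : ℤ) : ℂ) * (Z - s) ^ ((-(k + 1) : ℤ) - 1) * (-1)
        = ((k : ℂ) + 1) * (Z - s) ^ (-((k:ℤ) + 1 + 1) : ℤ) := by
      push_cast
      ring_nf
    rw [h3]
    push_cast [Nat.factorial_succ]
    ring_nf

lemma iteratedDeriv_zero_fun (k : ℕ) : iteratedDeriv k (fun _ : ℂ => (0:ℂ)) = fun _ => 0 := by
  induction k with
  | zero => simp
  | succ k ih =>
    rw [iteratedDeriv_succ, ih]
    funext x
    simp

/-- Let `h, F` be analytic on an open set `U`, let `ρ ∈ U` be a zero of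
`h` of finite order `m ≥ 1`, let `Z ∈ U`, `Z ≠ ρ`, and let `c_0, c_1, …` be the Taylor
coefficients at `ρ` of the analytic function equal to `(s−ρ)^m/h(s)` near `ρ`.  Then for
all sufficiently small `r > 0`,
`(1/2πi)∮_{|s−ρ|=r} F(s)/(h(s)(Z−s)) ds
  = Σ_{j=0}^{m−1} Σ_{i=0}^{j} c_{j−i}·(F^{(i)}(ρ)/i!)·(Z−ρ)^{−(m−j)}`. -/
theorem stmt15 (U : Set ℂ) (hU : IsOpen U) (h F : ℂ → ℂ)
    (hh : AnalyticOnNhd ℂ h U) (hF : AnalyticOnNhd ℂ F U)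
    (ρ : ℂ) (hρ : ρ ∈ U) (m : ℕ) (hm1 : 1 ≤ m)
    (hvan : ∀ j : ℕ, j < m → iteratedDeriv j h ρ = 0)
    (hnz : iteratedDeriv m h ρ ≠ 0)
    (Z : ℂ) (hZ : Z ∈ U) (hZρ : Z ≠ ρ)
    (H : ℂ → ℂ) (hH : AnalyticAt ℂ H ρ)
    (hHeq : ∀ᶠ s in nhdsWithin ρ {ρ}ᶜ, H s = (s - ρ) ^ m / h s)
    (c : ℕ → ℂ) (hc : ∀ k : ℕ, c k = iteratedDeriv k H ρ / (k.factorial : ℂ)) :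
    ∃ r₀ : ℝ, 0 < r₀ ∧ ∀ r : ℝ, 0 < r → r < r₀ →
      (1/(2*π*I)) * (∮ s in C(ρ, r), F s / (h s * (Z - s))) =
        ∑ j ∈ Finset.range m, ∑ i ∈ Finset.range (j + 1),
          c (j - i) * (iteratedDeriv i F ρ / (i.factorial : ℂ)) *
            (Z - ρ) ^ (-((m - j : ℕ) : ℤ)) := by
  obtain ⟨n, rfl⟩ : ∃ n, m = n + 1 := ⟨m - 1, by omega⟩
  set W : ℂ → ℂ := fun s => (Z - s)⁻¹ with hWdef
  -- h is eventually nonzero on a punctured neighborhood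
  have hne : ∀ᶠ y in 𝓝[≠] ρ, h y ≠ 0 := by
    rcases (hh ρ hρ).eventually_eq_zero_or_eventually_ne_zero with h0 | h1
    · exfalso
      apply hnz
      have : h =ᶠ[𝓝 ρ] fun _ => (0:ℂ) := h0
      rw [this.iteratedDeriv_eq (n+1), iteratedDeriv_zero_fun]
    · exact h1
  -- collect eventual facts
  have hev : ∀ᶠ y in 𝓝 ρ, (AnalyticAt ℂ H y ∧ y ∈ U) ∧
      (y ≠ ρ → (h y ≠ 0 ∧ H y = (y - ρ) ^ (n+1) / h y)) := by
    have e1 := hH.eventually_analyticAt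
    have e2 := hU.mem_nhds hρ
    have e3 : ∀ᶠ y in 𝓝 ρ, y ≠ ρ → (h y ≠ 0 ∧ H y = (y - ρ) ^ (n+1) / h y) := by
      have := (eventually_nhdsWithin_iff).mp (hne.and hHeq)
      filter_upwards [this] with y hy hyρ
      exact hy hyρ
    filter_upwards [e1, e2, e3] with y h1 h2 h3
    exact ⟨⟨h1, h2⟩, h3⟩
  rcases Metric.eventually_nhds_iff.mp hev with ⟨ε, hε, hball⟩
  have hdZ : 0 < dist Z ρ := dist_pos.mpr hZρ
  refine ⟨min ε (dist Z ρ), lt_min hε hdZ, fun r hr hrlt => ?_⟩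
  have hrε : r < ε := lt_of_lt_of_le hrlt (min_le_left _ _)
  have hrZ : r < dist Z ρ := lt_of_lt_of_le hrlt (min_le_right _ _)
  set G : ℂ → ℂ := fun s => H s * (F s * W s) with hGdef
  -- facts on closed ball
  have hball' : ∀ s ∈ Metric.closedBall ρ r, (AnalyticAt ℂ H s ∧ s ∈ U) ∧
      (s ≠ ρ → (h s ≠ 0 ∧ H s = (s - ρ) ^ (n+1) / h s)) := by
    intro s hs
    exact hball (lt_of_le_of_lt (Metric.mem_closedBall.mp hs) hrε)
  have hZs : ∀ s ∈ Metric.closedBall ρ r, Z - s ≠ 0 := by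
    intro s hs hc0
    have hsZ : s = Z := by
      have := sub_eq_zero.mp hc0
      exact this.symm
    rw [hsZ] at hs
    have : dist Z ρ ≤ r := Metric.mem_closedBall.mp hs
    linarith
  have hGan : ∀ s ∈ Metric.closedBall ρ r, AnalyticAt ℂ G s := by
    intro s hs
    have hHs := (hball' s hs).1.1
    have hFs := hF s (hball' s hs).1.2
    have hWs : AnalyticAt ℂ W s :=
      (analyticAt_const.sub analyticAt_id).inv (hZs s hs)
    exact hHs.mul (hFs.mul hWs)
  have hGd : DifferentiableOn ℂ G (Metric.closedBall ρ r) := fun s hs =>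
    ((hGan s hs).differentiableAt).differentiableWithinAt
  -- power series of G on the ball of radius r
  have hps := DifferentiableOn.hasFPowerSeriesOnBall (R := ⟨r, hr.le⟩) hGd
    (by exact_mod_cast hr)
  -- Step A : the integral is the n-th Cauchy power series coefficient of G
  have hint : (∮ s in C(ρ, r), F s / (h s * (Z - s)))
      = ∮ z in C(ρ, r), (1 / (z - ρ)) ^ n • (z - ρ)⁻¹ • G z := by
    refine circleIntegral.integral_congr hr.le fun z hz => ?_
    have hdz : dist z ρ = r := Metric.mem_sphere.mp hz
    have hzρ : z ≠ ρ := by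
      intro hzr
      rw [hzr, dist_self] at hdz
      exact absurd hdz.symm (ne_of_gt hr)
    have hzcb : z ∈ Metric.closedBall ρ r := Metric.mem_closedBall.mpr hdz.le
    obtain ⟨hhz, hHz⟩ := (hball' z hzcb).2 hzρ
    have hzρ' : z - ρ ≠ 0 := sub_ne_zero.mpr hzρ
    have hZz := hZs z hzcb
    show F z / (h z * (Z - z)) = (1 / (z - ρ)) ^ n • ((z - ρ)⁻¹ • G z)
    simp only [smul_eq_mul, hGdef, hWdef]
    rw [hHz]
    field_simp
    have hp : (z - ρ)⁻¹ ^ n * (z - ρ) ^ n = 1 := by rw [← mul_pow, inv_mul_cancel₀ hzρ', one_pow]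
    linear_combination (F z * ρ - F z * z) * hp
  have keyA : (1/(2*π*I)) * (∮ s in C(ρ, r), F s / (h s * (Z - s)))
      = cauchyPowerSeries G ρ r n (fun _ => 1) := by
    rw [cauchyPowerSeries_apply, hint]
    simp [smul_eq_mul, one_div]
  -- Step B : the coefficient equals iteratedDeriv n G ρ / n!
  have keyB : (cauchyPowerSeries G ρ r n fun _ => 1)
      = iteratedDeriv n G ρ / (n.factorial : ℂ) := by
    have hfs := hps.factorial_smul (1 : ℂ) n
    rw [← iteratedDeriv_eq_iteratedFDeriv] at hfs
    have hfne : (n.factorial : ℂ) ≠ 0 := Nat.cast_ne_zero.mpr n.factorial_ne_zero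
    rw [nsmul_eq_mul] at hfs
    field_simp [← hfs]
    exact (mul_comm _ _).trans hfs
  -- Step C : compute iteratedDeriv n G ρ / n! as the double sum
  have hFρ : AnalyticAt ℂ F ρ := hF ρ hρ
  have hWρ : AnalyticAt ℂ W ρ :=
    (analyticAt_const.sub analyticAt_id).inv (sub_ne_zero.mpr hZρ)
  have hρZ : ρ ≠ Z := Ne.symm hZρ
  have hWcoeff : ∀ k : ℕ, iteratedDeriv k W ρ / (k.factorial : ℂ)
      = (Z - ρ) ^ (-(k + 1) : ℤ) := by
    intro k
    have hkf : (k.factorial : ℂ) ≠ 0 := Nat.cast_ne_zero.mpr k.factorial_ne_zero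
    rw [hWdef, iteratedDeriv_sub_inv Z k ρ hρZ]
    field_simp
  have keyC : iteratedDeriv n G ρ / (n.factorial : ℂ)
      = ∑ j ∈ Finset.range (n+1), ∑ i ∈ Finset.range (j + 1),
          c (j - i) * (iteratedDeriv i F ρ / (i.factorial : ℂ)) *
            (Z - ρ) ^ (-((n + 1 - j : ℕ) : ℤ)) := by
    have e1 := taylorCoeff_mul_analytic (g := fun s => F s * W s) hH (hFρ.mul hWρ) n
    have e2 : ∀ a, a ∈ Finset.range (n+1) →
        (iteratedDeriv a H ρ / (a.factorial : ℂ)) *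
          (iteratedDeriv (n - a) (fun s => F s * W s) ρ / ((n - a).factorial : ℂ))
        = ∑ i ∈ Finset.range (n + 1 - a),
            c a * ((iteratedDeriv i F ρ / (i.factorial : ℂ)) *
              (Z - ρ) ^ (-((n - a - i : ℕ) + 1) : ℤ)) := by
      intro a ha
      rw [taylorCoeff_mul_analytic hFρ hWρ (n - a), Finset.mul_sum]
      have hrange : n - a + 1 = n + 1 - a := by
        have := Finset.mem_range.mp ha; omega
      rw [← hrange]
      refine Finset.sum_congr rfl fun i hi => ?_
      rw [hWcoeff (n - a - i), ← hc a]
    rw [e1, Finset.sum_congr rfl e2,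
      tri_sum (fun a i => c a * ((iteratedDeriv i F ρ / (i.factorial : ℂ)) *
        (Z - ρ) ^ (-((n - a - i : ℕ) + 1) : ℤ))) n]
    refine Finset.sum_congr rfl fun j hj => Finset.sum_congr rfl fun i hi => ?_
    have hj' := Finset.mem_range.mp hj
    have hi' := Finset.mem_range.mp hi
    have h1 : n - (j - i) - i = n - j := by omega
    have h2 : (-((n - j : ℕ) + 1) : ℤ) = (-((n + 1 - j : ℕ) : ℤ)) := by
      push_cast [Nat.cast_sub (by omega : j ≤ n), Nat.cast_sub (by omega : j ≤ n + 1)]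
      ring
    rw [h1, h2]
    ring
  rw [keyA]
  show (cauchyPowerSeries G ρ r n fun _ => 1) = _
  rw [keyB, keyC]

end
end
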